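/- Fix φ₀ ∈ [0, π/2] and an integer s ≥ 2. With Δ = 2π/M, S(s, φ₀) = Σ_{j=0}^{s-1} σ(φ₀, (j − (s−1)/2)Δ)², and σ(φ₀, t) = arccos(sin²φ₀ + cos²φ₀ cos t), one has (1/s) S(s, φ₀) = cos²φ₀ · (Δ²/12)(s² − 1) + O(Δ⁴) as M → ∞ with s fixed; i.e., there exist constants C, M₀ such that for all M ≥ M₀, |(1/s)S(s,φ₀) − cos²φ₀ (Δ²/12)(s²−1)| ≤ C Δ⁴. -/

import Mathlib

open Real

private lemma arccos_antitone {x y : ℝ} (h : x ≤ y) : arccos y ≤ arccos x := by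
  unfold Real.arccos
  have := Real.monotone_arcsin h
  linarith

/-- Sum of j over range -/
private lemma sum_id_real (n : ℕ) : ∑ j ∈ Finset.range n, (j : ℝ) = n * (n - 1) / 2 := by
  induction n with
  | zero => simp
  | succ k ih =>
    rw [Finset.sum_range_succ, ih]
    push_cast
    ring

private lemma sum_sq_real (n : ℕ) :
    ∑ j ∈ Finset.range n, (j : ℝ) ^ 2 = n * (n - 1) * (2 * n - 1) / 6 := by
  induction n with
  | zero => simp
  | succ k ih =>
    rw [Finset.sum_range_succ, ih]
    push_cast
    ring

private lemma sum_centered_sq (s : ℕ) :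
    ∑ j ∈ Finset.range s, ((j : ℝ) - ((s : ℝ) - 1) / 2) ^ 2
      = s * ((s : ℝ) ^ 2 - 1) / 12 := by
  have h : ∀ j ∈ Finset.range s, ((j : ℝ) - ((s : ℝ) - 1) / 2) ^ 2
      = (j : ℝ) ^ 2 - ((s : ℝ) - 1) * (j : ℝ) + (((s : ℝ) - 1) / 2) ^ 2 := by
    intro j _; ring
  rw [Finset.sum_congr rfl h]
  rw [Finset.sum_add_distrib, Finset.sum_sub_distrib, ← Finset.mul_sum,
    sum_sq_real, sum_id_real, Finset.sum_const, Finset.card_range]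
  push_cast
  ring

private lemma arccos_sq_lower (u : ℝ) (h0 : 0 ≤ u) (h1 : u ≤ 1 / 8) :
    2 * u ≤ arccos (1 - u) ^ 2 := by
  have hxm : (-1 : ℝ) ≤ 1 - u := by linarith
  have hx1 : 1 - u ≤ 1 := by linarith
  have hcosA : cos (arccos (1 - u)) = 1 - u := cos_arccos hxm hx1
  have h := one_sub_sq_div_two_le_cos (x := arccos (1 - u))
  rw [hcosA] at h
  linarith

private lemma arccos_sq_upper (u : ℝ) (h0 : 0 ≤ u) (h1 : u ≤ 1 / 8) :
    arccos (1 - u) ^ 2 ≤ 2 * u + u ^ 2 := by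
  have hθnn : 0 ≤ 2 * u + u ^ 2 := by nlinarith
  have hθsq : Real.sqrt (2 * u + u ^ 2) ^ 2 = 2 * u + u ^ 2 := Real.sq_sqrt hθnn
  have hθ0 : 0 ≤ Real.sqrt (2 * u + u ^ 2) := Real.sqrt_nonneg _
  have hθ1 : Real.sqrt (2 * u + u ^ 2) ≤ 1 := by
    rw [show (1 : ℝ) = Real.sqrt 1 by simp]
    exact Real.sqrt_le_sqrt (by nlinarith)
  have hθπ : Real.sqrt (2 * u + u ^ 2) ≤ π := le_trans hθ1 (by linarith [Real.pi_gt_three])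
  have habs : |Real.sqrt (2 * u + u ^ 2)| ≤ 1 := by rw [abs_of_nonneg hθ0]; exact hθ1
  have hcb := (abs_le.mp (Real.cos_bound habs)).2
  have habs4 : |Real.sqrt (2 * u + u ^ 2)| ^ 4 = (2 * u + u ^ 2) ^ 2 := by
    rw [show |Real.sqrt (2 * u + u ^ 2)| ^ 4 = (|Real.sqrt (2 * u + u ^ 2)| ^ 2) ^ 2 by ring,
      sq_abs, hθsq]
  rw [habs4, hθsq] at hcb
  have hsq : (2 * u + u ^ 2) ^ 2 ≤ 5 * u ^ 2 := by
    nlinarith [sq_nonneg u, mul_nonneg (mul_nonneg h0 h0) h0,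
      mul_nonneg (mul_nonneg (mul_nonneg h0 h0) h0) h0]
  have hcosθ' : cos (Real.sqrt (2 * u + u ^ 2)) ≤ 1 - u := by nlinarith [sq_nonneg u]
  have hA : arccos (1 - u) ≤ Real.sqrt (2 * u + u ^ 2) := by
    have h := arccos_antitone hcosθ'
    rwa [arccos_cos hθ0 hθπ] at h
  calc arccos (1 - u) ^ 2 ≤ Real.sqrt (2 * u + u ^ 2) ^ 2 :=
        pow_le_pow_left₀ (arccos_nonneg _) hA 2
  _ = 2 * u + u ^ 2 := hθsq

/-- Key pointwise estimate. -/
private lemma key_est (c t : ℝ) (hc0 : 0 ≤ c) (hc1 : c ≤ 1) (ht : |t| ≤ 1 / 2) :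
    |arccos (1 - c ^ 2 * (1 - cos t)) ^ 2 - c ^ 2 * t ^ 2| ≤ t ^ 4 := by
  have ht2 : t ^ 2 ≤ 1 / 4 := by nlinarith [sq_abs t, abs_nonneg t]
  have hcos1 : cos t ≤ 1 := cos_le_one t
  have hcosge : 1 - t ^ 2 / 2 ≤ cos t := one_sub_sq_div_two_le_cos
  have hc2 : c ^ 2 ≤ 1 := by nlinarith
  have hu0 : 0 ≤ c ^ 2 * (1 - cos t) := by nlinarith
  have hu_le : c ^ 2 * (1 - cos t) ≤ t ^ 2 / 2 := by nlinarith
  have hu8 : c ^ 2 * (1 - cos t) ≤ 1 / 8 := by nlinarith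
  have hlow := arccos_sq_lower _ hu0 hu8
  have hup := arccos_sq_upper _ hu0 hu8
  have hcb2 := (abs_le.mp (Real.cos_bound (x := t) (le_trans ht (by norm_num)))).2
  have habs_t4 : |t| ^ 4 = t ^ 4 := by
    rw [show |t| ^ 4 = (|t| ^ 2) ^ 2 by ring, sq_abs]; ring
  rw [habs_t4] at hcb2
  rw [abs_le]
  constructor
  · nlinarith [sq_nonneg t, sq_nonneg (t ^ 2)]
  · have h2 : (c ^ 2 * (1 - cos t)) ^ 2 ≤ t ^ 4 / 4 := by nlinarith
    nlinarith [sq_nonneg t, sq_nonneg (t ^ 2)]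

set_option maxHeartbeats 1000000 in
open Real in
theorem block_distortion_asymptotics (φ₀ : ℝ) (s : ℕ)
    (hφ : φ₀ ∈ Set.Icc 0 (π / 2)) (hs : 2 ≤ s) :
    ∃ C : ℝ, ∃ M₀ : ℕ, ∀ M : ℕ, M₀ ≤ M →
      |(1 / (s : ℝ)) * (∑ j ∈ Finset.range s,
          (arccos (sin φ₀ ^ 2 + cos φ₀ ^ 2
            * cos (((j : ℝ) - ((s : ℝ) - 1) / 2) * (2 * π / M)))) ^ 2)
        - cos φ₀ ^ 2 * ((2 * π / M) ^ 2 / 12) * ((s : ℝ) ^ 2 - 1)|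
      ≤ C * (2 * π / M) ^ 4 := by
  obtain ⟨hφ0, hφ2⟩ := hφ
  have hc0 : 0 ≤ cos φ₀ := cos_nonneg_of_mem_Icc ⟨by linarith [pi_pos.le], hφ2⟩
  have hc1 : cos φ₀ ≤ 1 := cos_le_one _
  set c : ℝ := cos φ₀ with hc_def
  refine ⟨(s : ℝ) ^ 4, 7 * s, fun M hM => ?_⟩
  have hs0 : (0 : ℝ) < s := by positivity
  have hM0 : (0 : ℝ) < M := by
    have : 0 < 7 * s := by omega
    exact_mod_cast lt_of_lt_of_le (by exact_mod_cast this) (by exact_mod_cast hM)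
  set Δ : ℝ := 2 * π / M with hΔ_def
  have hΔ0 : 0 < Δ := by positivity
  have hπ : π ≤ 3.15 := by linarith [pi_lt_d2]
  have hsM : (7 : ℝ) * s ≤ M := by exact_mod_cast hM
  -- bound on each t_j
  have hbound : ∀ j ∈ Finset.range s,
      |((j : ℝ) - ((s : ℝ) - 1) / 2) * Δ| ≤ 1 / 2 ∧
      |((j : ℝ) - ((s : ℝ) - 1) / 2) * Δ| ≤ (s : ℝ) / 2 * Δ := by
    intro j hj
    have hj' : (j : ℝ) ≤ (s : ℝ) - 1 := by
      have : j < s := Finset.mem_range.mp hj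
      have : (j : ℝ) + 1 ≤ s := by exact_mod_cast this
      linarith
    have hj0 : (0 : ℝ) ≤ j := Nat.cast_nonneg _
    have habsj : |((j : ℝ) - ((s : ℝ) - 1) / 2)| ≤ (s : ℝ) / 2 := by
      rw [abs_le]; constructor <;> nlinarith
    have h2 : |((j : ℝ) - ((s : ℝ) - 1) / 2) * Δ| ≤ (s : ℝ) / 2 * Δ := by
      rw [abs_mul, abs_of_nonneg hΔ0.le]
      exact mul_le_mul_of_nonneg_right habsj hΔ0.le
    refine ⟨le_trans h2 ?_, h2⟩
    -- s/2 * Δ = s/2 * 2π/M ≤ s π / (7 s) = π/7 ≤ 1/2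
    rw [hΔ_def, show (s : ℝ) / 2 * (2 * π / M) = (s : ℝ) * π / M by ring,
      div_le_iff₀ hM0]
    nlinarith [pi_pos]
  -- rewrite argument and apply key estimate
  have hkey : ∀ j ∈ Finset.range s,
      |(arccos (sin φ₀ ^ 2 + c ^ 2 * cos (((j : ℝ) - ((s : ℝ) - 1) / 2) * Δ))) ^ 2
        - c ^ 2 * (((j : ℝ) - ((s : ℝ) - 1) / 2) * Δ) ^ 2|
      ≤ ((s : ℝ) / 2 * Δ) ^ 4 := by
    intro j hj
    obtain ⟨h1, h2⟩ := hbound j hj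
    set t : ℝ := ((j : ℝ) - ((s : ℝ) - 1) / 2) * Δ with ht_def
    have harg : sin φ₀ ^ 2 + c ^ 2 * cos t = 1 - c ^ 2 * (1 - cos t) := by
      have := sin_sq_add_cos_sq φ₀
      rw [hc_def]; nlinarith [this]
    rw [harg]
    refine le_trans (key_est c t hc0 hc1 h1) ?_
    have : t ^ 4 = |t| ^ 4 := by
      rw [show |t| ^ 4 = (|t| ^ 2) ^ 2 by ring, sq_abs]; ring
    rw [this]
    have h0 : (0 : ℝ) ≤ |t| := abs_nonneg t
    have hsd : (0 : ℝ) ≤ (s : ℝ) / 2 * Δ := by positivity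
    nlinarith [pow_le_pow_left₀ h0 h2 4]
  -- main computation
  have hsum_exact : ∑ j ∈ Finset.range s, c ^ 2 * (((j : ℝ) - ((s : ℝ) - 1) / 2) * Δ) ^ 2
      = c ^ 2 * Δ ^ 2 * ((s : ℝ) * ((s : ℝ) ^ 2 - 1) / 12) := by
    rw [← sum_centered_sq s, Finset.mul_sum]
    congr 1
    · ext j; ring
  have hmain : (1 / (s : ℝ)) * (∑ j ∈ Finset.range s, c ^ 2 * (((j : ℝ) - ((s : ℝ) - 1) / 2) * Δ) ^ 2)
      = c ^ 2 * (Δ ^ 2 / 12) * ((s : ℝ) ^ 2 - 1) := by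
    rw [hsum_exact]
    field_simp
  rw [← hmain]
  rw [← mul_sub, ← Finset.sum_sub_distrib]
  rw [abs_mul]
  have habs_s : |1 / (s : ℝ)| = 1 / (s : ℝ) := abs_of_pos (by positivity)
  rw [habs_s]
  have hsum_bound : |∑ j ∈ Finset.range s,
      ((arccos (sin φ₀ ^ 2 + c ^ 2 * cos (((j : ℝ) - ((s : ℝ) - 1) / 2) * Δ))) ^ 2
        - c ^ 2 * (((j : ℝ) - ((s : ℝ) - 1) / 2) * Δ) ^ 2)|
      ≤ (s : ℝ) * ((s : ℝ) / 2 * Δ) ^ 4 := by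
    refine le_trans (Finset.abs_sum_le_sum_abs _ _) ?_
    refine le_trans (Finset.sum_le_sum hkey) ?_
    rw [Finset.sum_const, Finset.card_range, nsmul_eq_mul]
  calc 1 / (s : ℝ) * |∑ j ∈ Finset.range s,
      ((arccos (sin φ₀ ^ 2 + c ^ 2 * cos (((j : ℝ) - ((s : ℝ) - 1) / 2) * Δ))) ^ 2
        - c ^ 2 * (((j : ℝ) - ((s : ℝ) - 1) / 2) * Δ) ^ 2)|
      ≤ 1 / (s : ℝ) * ((s : ℝ) * ((s : ℝ) / 2 * Δ) ^ 4) := by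
        exact mul_le_mul_of_nonneg_left hsum_bound (by positivity)
    _ = ((s : ℝ) / 2 * Δ) ^ 4 := by
        field_simp
    _ ≤ (s : ℝ) ^ 4 * Δ ^ 4 := by
        have h1 : ((s : ℝ) / 2 * Δ) ^ 4 = (s : ℝ) ^ 4 * Δ ^ 4 / 16 := by ring
        rw [h1]
        nlinarith [mul_nonneg (pow_nonneg hs0.le 4) (pow_nonneg hΔ0.le 4)]
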